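/- Let K be an algebraically closed field with char(K) ≠ 2, g a positive integer, α_1, …, α_{2g+1} pairwise distinct elements of K, and f(x) = ∏_{i=1}^{2g+1}(x − α_i) ∈ K[x]. Let β be one of the α_i, let U(x) ∈ K[x] be monic of degree g with U(β) ≠ 0, and let V(x) ∈ K[x] with deg V < g and U(x) ∣ f(x) − V(x)^2. Set V_1(x) = V(x) − (V(β)/U(β))·U(x), Ũ(x) = (f(x) − V_1(x)^2)/((x − β)·U(x)), and V^{[β]}(x) = −V(x) + (V(β)/U(β))·(U(x) − Ũ(x)). Then Ũ(x) divides f(x) − (V^{[β]}(x))^2. -/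

import Mathlib

open Polynomial in
/-- In the setting of Statement 6, with
`V₁ = V - (V(β)/U(β))·U`, `Ut = Ũ = (f - V₁²) /ₘ ((X - C β)·U)` and
`Vβ = V^[β] = -V + (V(β)/U(β))·(U - Ũ)`, the polynomial `Ũ` divides
`f - (V^[β])²`. -/
theorem Ut_dvd_f_sub_Vbeta_sq
    {K : Type*} [Field K] [IsAlgClosed K] (hK : ringChar K ≠ 2)
    (g : ℕ) (hg : 0 < g) (α : Fin (2 * g + 1) → K) (hα : Function.Injective α)
    (f : K[X]) (hf : f = ∏ i, (X - C (α i)))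
    (i₀ : Fin (2 * g + 1)) (β : K) (hβ : β = α i₀)
    (U : K[X]) (hU : U.Monic) (hUdeg : U.natDegree = g) (hUβ : U.eval β ≠ 0)
    (V : K[X]) (hVdeg : V.degree < (g : WithBot ℕ))
    (hdvd : U ∣ f - V ^ 2)
    (V₁ : K[X]) (hV₁ : V₁ = V - C (V.eval β / U.eval β) * U)
    (Ut : K[X]) (hUt : Ut = (f - V₁ ^ 2) /ₘ ((X - C β) * U))
    (Vβ : K[X]) (hVβ : Vβ = -V + C (V.eval β / U.eval β) * (U - Ut)) :
    Ut ∣ f - Vβ ^ 2 := by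
  set c : K := V.eval β / U.eval β with hc
  -- U divides f - V₁²
  obtain ⟨d, hd⟩ := hdvd
  have hUdvd : U ∣ f - V₁ ^ 2 := ⟨d + 2 * C c * V - C c ^ 2 * U, by
    rw [hV₁]; linear_combination hd⟩
  -- X - C β divides f - V₁²
  have hfβ : f.eval β = 0 := by
    rw [hf, eval_prod]
    exact Finset.prod_eq_zero (Finset.mem_univ i₀) (by simp [hβ])
  have hV₁β : V₁.eval β = 0 := by
    simp only [hV₁, eval_sub, eval_mul, eval_C, hc]
    field_simp
    simp
  have hXdvd : (X - C β) ∣ f - V₁ ^ 2 := by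
    rw [dvd_iff_isRoot]
    simp [IsRoot, hfβ, hV₁β]
  have hcop : IsCoprime (X - C β) U := by
    rcases EuclideanDomain.dvd_or_coprime (X - C β) U (irreducible_X_sub_C β) with h | h
    · exact absurd ((dvd_iff_isRoot).mp h) hUβ
    · exact h
  have hmul : (X - C β) * U ∣ f - V₁ ^ 2 := hcop.mul_dvd hXdvd hUdvd
  obtain ⟨k, hk⟩ := hmul
  have hmonic : ((X - C β) * U).Monic := (monic_X_sub_C β).mul hU
  have hUtk : Ut = k := by
    rw [hUt, hk, Polynomial.mul_divByMonic_cancel_left _ hmonic]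
  have key : f - V₁ ^ 2 = (X - C β) * U * Ut := by rw [hUtk]; exact hk
  refine ⟨(X - C β) * U - 2 * C c * V₁ - C c ^ 2 * Ut, ?_⟩
  rw [hVβ]
  have hV' : -V + C c * (U - Ut) = -V₁ - C c * Ut := by rw [hV₁]; ring
  rw [hV']
  linear_combination key
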